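/- Let N ≥ 3, R > 0, let H ⊂ ℝ^N be an open half-space with 0 ∈ ∂H, and let σ_H be the reflection across ∂H. For x, y ∈ H ∩ B_R with x ≠ y, set a = |x − y|, ã = |y − σ_H x|, b = (|x|/R)·|y − R²x/|x|²|, and b̃ = (|σ_H x|/R)·|y − R²σ_H x/|σ_H x|²|. Then ã·b ≥ a·b̃ and b̃ ≥ b (equivalently, ã/a ≥ b̃/b ≥ 1). -/

import Mathlib

open scoped RealInnerProductSpace

noncomputable def reflectHyp0 {E : Type*} [NormedAddCommGroup E] [InnerProductSpace ℝ E]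
    (a : E) (x : E) : E :=
  x - ((2 * ⟪a, x⟫) / ⟪a, a⟫) • a

lemma kelvin_sq {E : Type*} [NormedAddCommGroup E] [InnerProductSpace ℝ E]
    (R : ℝ) (hR : 0 < R) (x y : E) (hx : x ≠ 0) :
    ((‖x‖ / R) * ‖y - (R ^ 2 / ‖x‖ ^ 2) • x‖) ^ 2
      = ‖x‖ ^ 2 * ‖y‖ ^ 2 / R ^ 2 - 2 * ⟪x, y⟫ + R ^ 2 := by
  have hnx : (0:ℝ) < ‖x‖ := norm_pos_iff.mpr hx
  have h1 : ‖y - (R ^ 2 / ‖x‖ ^ 2) • x‖ ^ 2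
      = ‖y‖ ^ 2 - 2 * ((R ^ 2 / ‖x‖ ^ 2) * ⟪y, x⟫) + (R ^ 2 / ‖x‖ ^ 2) ^ 2 * ‖x‖ ^ 2 := by
    rw [norm_sub_sq_real, real_inner_smul_right, norm_smul]
    have : |R ^ 2 / ‖x‖ ^ 2| = R ^ 2 / ‖x‖ ^ 2 := abs_of_pos (by positivity)
    rw [Real.norm_eq_abs, this]; ring
  have hpy : ⟪y, x⟫ = ⟪x, y⟫ := real_inner_comm x y
  rw [mul_pow, h1, hpy]
  field_simp

lemma refl_norm {E : Type*} [NormedAddCommGroup E] [InnerProductSpace ℝ E]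
    (a : E) (ha : a ≠ 0) (x : E) : ‖reflectHyp0 a x‖ = ‖x‖ := by
  have hna : (0:ℝ) < ‖a‖ := norm_pos_iff.mpr ha
  have h : ‖reflectHyp0 a x‖ ^ 2 = ‖x‖ ^ 2 := by
    unfold reflectHyp0
    rw [norm_sub_sq_real, real_inner_smul_right, norm_smul, real_inner_comm x a,
      Real.norm_eq_abs, mul_pow, sq_abs, real_inner_self_eq_norm_sq]
    field_simp
    ring
  nlinarith [norm_nonneg (reflectHyp0 a x), norm_nonneg x]

lemma refl_inner {E : Type*} [NormedAddCommGroup E] [InnerProductSpace ℝ E]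
    (a : E) (x y : E) :
    ⟪reflectHyp0 a x, y⟫ = ⟪x, y⟫ - 2 * ⟪a, x⟫ * ⟪a, y⟫ / ⟪a, a⟫ := by
  unfold reflectHyp0
  rw [inner_sub_left, real_inner_smul_left]
  ring

set_option maxHeartbeats 1000000 in
/-- For `x, y` in `H ∩ B_R` with `x ≠ y`, where `H = {x : ⟪a,x⟫ > 0}` is
an open half-space through the origin with reflection `σ_H`, setting `a' = |x − y|`,
`ã = |y − σ_H x|`, `b = (|x|/R)·|y − R²x/|x|²|`, `b̃ = (|σ_H x|/R)·|y − R²σ_H x/|σ_H x|²|`,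
one has `ã·b ≥ a'·b̃` and `b̃ ≥ b`. -/
theorem stmt_18 (N : ℕ) (hN : 3 ≤ N) (R : ℝ) (hR : 0 < R)
    (a : EuclideanSpace ℝ (Fin N)) (ha : a ≠ 0)
    (x y : EuclideanSpace ℝ (Fin N))
    (hxB : x ∈ Metric.closedBall (0 : EuclideanSpace ℝ (Fin N)) R)
    (hyB : y ∈ Metric.closedBall (0 : EuclideanSpace ℝ (Fin N)) R)
    (hxH : 0 < ⟪a, x⟫) (hyH : 0 < ⟪a, y⟫) (hxy : x ≠ y) :
    ‖x - y‖ *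
        ((‖reflectHyp0 a x‖ / R) *
          ‖y - (R ^ 2 / ‖reflectHyp0 a x‖ ^ 2) • reflectHyp0 a x‖) ≤
      ‖y - reflectHyp0 a x‖ * ((‖x‖ / R) * ‖y - (R ^ 2 / ‖x‖ ^ 2) • x‖) ∧
    (‖x‖ / R) * ‖y - (R ^ 2 / ‖x‖ ^ 2) • x‖ ≤
      (‖reflectHyp0 a x‖ / R) *
        ‖y - (R ^ 2 / ‖reflectHyp0 a x‖ ^ 2) • reflectHyp0 a x‖ := by
  set s := reflectHyp0 a x with hs
  have hx0 : x ≠ 0 := by rintro rfl; simp at hxH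
  have hns : ‖s‖ = ‖x‖ := refl_norm a ha x
  have hs0 : s ≠ 0 := by
    intro h; apply hx0; rw [← norm_eq_zero, ← hns, h, norm_zero]
  have haa : (0:ℝ) < ⟪a, a⟫ := by
    rw [real_inner_self_eq_norm_sq]
    have : (0:ℝ) < ‖a‖ := norm_pos_iff.mpr ha
    positivity
  have hxR : ‖x‖ ≤ R := by simpa using hxB
  have hyR : ‖y‖ ≤ R := by simpa using hyB
  set A := ‖x - y‖ with hA
  set At := ‖y - s‖ with hAt
  set B := (‖x‖ / R) * ‖y - (R ^ 2 / ‖x‖ ^ 2) • x‖ with hB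
  set Bt := (‖s‖ / R) * ‖y - (R ^ 2 / ‖s‖ ^ 2) • s‖ with hBt
  set t := 2 * (2 * ⟪a, x⟫ * ⟪a, y⟫ / ⟪a, a⟫) with ht
  have ht0 : 0 < t := by
    rw [ht]; positivity
  have hq : ⟪s, y⟫ = ⟪x, y⟫ - 2 * ⟪a, x⟫ * ⟪a, y⟫ / ⟪a, a⟫ := refl_inner a x y
  have hAsq : A ^ 2 = ‖x‖ ^ 2 - 2 * ⟪x, y⟫ + ‖y‖ ^ 2 := by
    rw [hA, norm_sub_sq_real]
  have hAtsq : At ^ 2 = A ^ 2 + t := by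
    rw [hAt, norm_sub_sq_real, ← real_inner_comm y s, hq, hns, hAsq, ht]; ring
  have hBsq : B ^ 2 = ‖x‖ ^ 2 * ‖y‖ ^ 2 / R ^ 2 - 2 * ⟪x, y⟫ + R ^ 2 :=
    kelvin_sq R hR x y hx0
  have hBtsq : Bt ^ 2 = B ^ 2 + t := by
    rw [hBt, kelvin_sq R hR s y hs0, hq, hns, hBsq, ht]; ring
  have hA0 : 0 ≤ A := norm_nonneg _
  have hB0 : 0 ≤ B := by rw [hB]; positivity
  have hAt0 : 0 ≤ At := norm_nonneg _
  have hBt0 : 0 ≤ Bt := by rw [hBt]; positivity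
  have hAB : A ^ 2 ≤ B ^ 2 := by
    rw [hAsq, hBsq]
    have hx2 : ‖x‖ ^ 2 ≤ R ^ 2 := by nlinarith [norm_nonneg x]
    have hy2 : ‖y‖ ^ 2 ≤ R ^ 2 := by nlinarith [norm_nonneg y]
    have key : 0 ≤ (R ^ 2 - ‖x‖ ^ 2) * (R ^ 2 - ‖y‖ ^ 2) / R ^ 2 :=
      div_nonneg (mul_nonneg (by linarith) (by linarith)) (sq_nonneg R)
    have heq : ‖x‖ ^ 2 * ‖y‖ ^ 2 / R ^ 2 + R ^ 2 - ‖x‖ ^ 2 - ‖y‖ ^ 2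
        = (R ^ 2 - ‖x‖ ^ 2) * (R ^ 2 - ‖y‖ ^ 2) / R ^ 2 := by
      field_simp; ring
    linarith [heq ▸ key]
  clear_value A At B Bt t
  constructor
  · have hsq : (A * Bt) ^ 2 ≤ (At * B) ^ 2 := by
      have h1 : A ^ 2 * Bt ^ 2 ≤ At ^ 2 * B ^ 2 := by
        rw [hAtsq, hBtsq]; nlinarith [sq_nonneg A, ht0.le]
      calc (A * Bt) ^ 2 = A ^ 2 * Bt ^ 2 := by ring
        _ ≤ At ^ 2 * B ^ 2 := h1
        _ = (At * B) ^ 2 := by ring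
    have h := Real.sqrt_le_sqrt hsq
    rwa [Real.sqrt_sq (by positivity), Real.sqrt_sq (by positivity)] at h
  · have hsq : B ^ 2 ≤ Bt ^ 2 := by rw [hBtsq]; linarith
    have h := Real.sqrt_le_sqrt hsq
    rwa [Real.sqrt_sq hB0, Real.sqrt_sq hBt0] at h
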